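/- Let G be a finite group that is not a p-group for any prime p, and suppose there exists x ∈ G whose degree in the order superpower graph S(G) equals the minimum degree δ(S(G)), and that δ(S(G)) = κ(S(G)). Then G contains no element of order 2^α for any α ≥ 2. -/

import Mathlib

/-- The degree of a vertex: the number of its neighbours. -/
noncomputable def gDeg {V : Type*} (G : SimpleGraph V) (v : V) : ℕ :=
  (G.neighborSet v).ncard

/-- The minimum degree of a graph. -/
noncomputable def minDeg {V : Type*} (G : SimpleGraph V) : ℕ :=
  sInf (Set.range (gDeg G))

/-- The edge connectivity: the minimum size of a set of edges whose removal
disconnects the graph. -/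
noncomputable def edgeConn {V : Type*} (G : SimpleGraph V) : ℕ :=
  sInf {n : ℕ | ∃ S : Set (Sym2 V), S ⊆ G.edgeSet ∧ S.ncard = n ∧
    ¬ (G.deleteEdges S).Connected}

/-- The vertex connectivity: the minimum size of a set of vertices whose removal
disconnects the graph or leaves a single vertex. -/
noncomputable def vertexConn {V : Type*} (G : SimpleGraph V) : ℕ :=
  sInf {n : ℕ | ∃ S : Set V, S.ncard = n ∧ Sᶜ.Nonempty ∧
    (¬ (G.induce Sᶜ).Preconnected ∨ Sᶜ.ncard = 1)}

/-- A graph is minimally edge connected if deleting any edge decreases the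
edge connectivity by one. -/
def MinEdgeConnected {V : Type*} (G : SimpleGraph V) : Prop :=
  ∀ e ∈ G.edgeSet, edgeConn (G.deleteEdges {e}) = edgeConn G - 1

/-- A graph is minimally connected if deleting any edge decreases the
vertex connectivity by one. -/
def MinConnected {V : Type*} (G : SimpleGraph V) : Prop :=
  ∀ e ∈ G.edgeSet, vertexConn (G.deleteEdges {e}) = vertexConn G - 1

/-- The power graph of a group: distinct `x, y` are adjacent iff one is a
natural power of the other. -/
def powerGraph (G : Type*) [Group G] : SimpleGraph G :=
  SimpleGraph.fromRel (fun x y => ∃ m : ℕ, y = x ^ m)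

/-- The enhanced power graph of a group: distinct `x, y` are adjacent iff they
lie in a common cyclic subgroup. -/
def enhancedPowerGraph (G : Type*) [Group G] : SimpleGraph G :=
  SimpleGraph.fromRel
    (fun x y => ∃ z : G, x ∈ Subgroup.zpowers z ∧ y ∈ Subgroup.zpowers z)

/-- The order superpower graph of a group: distinct `x, y` are adjacent iff the
order of one divides the order of the other. -/
def superpowerGraph (G : Type*) [Group G] : SimpleGraph G :=
  SimpleGraph.fromRel (fun x y => orderOf x ∣ orderOf y)

/-- Let `G` be a finite group that is not a `p`-group, such that
some `x ∈ G` has degree equal to the minimum degree of the order superpower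
graph, and the minimum degree equals the vertex connectivity. Then `G` has no
element of order `2^α` with `α ≥ 2`. -/
theorem stmt_17 (G : Type*) [Group G] [Fintype G]
    (hnp : ¬ ∃ p n : ℕ, p.Prime ∧ Nat.card G = p ^ n)
    (hx : ∃ x : G, gDeg (superpowerGraph G) x = minDeg (superpowerGraph G))
    (heq : minDeg (superpowerGraph G) = vertexConn (superpowerGraph G)) :
    ∀ (y : G) (α : ℕ), 2 ≤ α → orderOf y ≠ 2 ^ α := by
  classical
  intro y α hα hy
  obtain ⟨x, hxdeg⟩ := hx
  set SG := superpowerGraph G with hSGdef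
  have mem_nb : ∀ v g : G, g ∈ SG.neighborSet v ↔
      g ≠ v ∧ (orderOf g ∣ orderOf v ∨ orderOf v ∣ orderOf g) := by
    intro v g
    simp only [hSGdef, superpowerGraph, SimpleGraph.mem_neighborSet,
      SimpleGraph.fromRel_adj, ne_eq]
    constructor
    · rintro ⟨h1, h2⟩; exact ⟨fun h => h1 h.symm, h2.symm⟩
    · rintro ⟨h1, h2⟩; exact ⟨fun h => h1 h.symm, h2.symm⟩
  have hy1 : y ≠ 1 := by
    intro h
    rw [h, orderOf_one] at hy
    have : 1 < 2 ^ α := Nat.one_lt_two_pow_iff.mpr (by omega)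
    omega
  haveI : Nontrivial G := ⟨⟨y, 1, hy1⟩⟩
  have hcard2 : 2 ≤ Fintype.card G := Fintype.one_lt_card
  have hcardnat : Nat.card G = Fintype.card G := Nat.card_eq_fintype_card
  -- odd prime divisor
  obtain ⟨q, hq, hqd, hq2⟩ : ∃ q : ℕ, q.Prime ∧ q ∣ Fintype.card G ∧ q ≠ 2 := by
    by_contra h
    push_neg at h
    refine hnp ⟨2, (Nat.card G).primeFactorsList.length, Nat.prime_two, ?_⟩
    exact Nat.eq_prime_pow_of_unique_prime_dvd (by omega)
      (fun hd hdvd => h _ hd (by rwa [hcardnat] at hdvd))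
  haveI := Fact.mk hq
  obtain ⟨z, hz⟩ := exists_prime_orderOf_dvd_card q hqd
  have hyz : ¬ (orderOf y ∣ orderOf z ∨ orderOf z ∣ orderOf y) := by
    rw [hy, hz]
    rintro (h | h)
    · have h2q : (2 : ℕ) ∣ q := dvd_trans (dvd_pow_self 2 (by omega : α ≠ 0)) h
      exact hq2 ((Nat.prime_dvd_prime_iff_eq Nat.prime_two hq).mp h2q).symm
    · exact hq2 ((Nat.prime_dvd_prime_iff_eq hq Nat.prime_two).mp (hq.dvd_of_dvd_pow h))
  have hyzne : y ≠ z := by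
    intro h
    exact hyz (Or.inl (by rw [h]))
  have hminley : minDeg SG ≤ gDeg SG y := Nat.sInf_le ⟨y, rfl⟩
  have degy : gDeg SG y ≤ Fintype.card G - 2 := by
    have hsub : SG.neighborSet y ⊆ ({y, z} : Set G)ᶜ := by
      intro g hg
      rw [mem_nb] at hg
      intro hmem
      rcases hmem with h | h
      · exact hg.1 h
      · rw [Set.mem_singleton_iff] at h
        subst h
        exact hyz hg.2.symm
    have h1 : (SG.neighborSet y).ncard ≤ (({y, z} : Set G)ᶜ).ncard :=
      Set.ncard_le_ncard hsub (Set.toFinite _)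
    have h2 := Set.ncard_add_ncard_compl ({y, z} : Set G)
    rw [Set.ncard_pair hyzne, hcardnat] at h2
    unfold gDeg
    omega
  have hfull : ∀ w : G, gDeg SG w = minDeg SG → SG.neighborSet w = {w}ᶜ → False := by
    intro w hw hN
    have h1 := Set.ncard_add_ncard_compl ({w} : Set G)
    rw [Set.ncard_singleton, hcardnat] at h1
    have h2 : gDeg SG w = Fintype.card G - 1 := by
      unfold gDeg
      rw [hN]
      omega
    omega
  have hx1 : orderOf x ≠ 1 := by
    intro h1
    apply hfull x hxdeg
    ext g
    rw [mem_nb]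
    simp [h1]
  -- choose a min-degree vertex of order ≥ 3
  obtain ⟨v, hvdeg, hv1, hv2⟩ : ∃ v : G, gDeg SG v = minDeg SG ∧
      orderOf v ≠ 1 ∧ orderOf v ≠ 2 := by
    by_cases h2 : orderOf x = 2
    · have hxy : x ≠ y := by
        intro h
        rw [h, hy] at h2
        have : α = 1 := Nat.pow_right_injective le_rfl (by simpa using h2)
        omega
      have hyNx : y ∈ SG.neighborSet x := by
        rw [mem_nb]
        exact ⟨fun h => hxy h.symm, Or.inr (by rw [h2, hy]; exact dvd_pow_self 2 (by omega))⟩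
      have hsub : SG.neighborSet y ⊆ (SG.neighborSet x \ {y}) ∪ {x} := by
        intro g hg
        rw [mem_nb] at hg
        by_cases hgx : g = x
        · exact Or.inr (by simp [hgx])
        · left
          refine ⟨?_, by simpa using hg.1⟩
          rw [mem_nb]
          refine ⟨hgx, ?_⟩
          rcases hg.2 with h | h
          · rw [hy] at h
            obtain ⟨j, hj, hgj⟩ := (Nat.dvd_prime_pow Nat.prime_two).mp h
            cases j with
            | zero => left; rw [h2, hgj]; simp
            | succ j => right; rw [h2, hgj]; exact dvd_pow_self 2 (Nat.succ_ne_zero j)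
          · right
            rw [h2]
            rw [hy] at h
            exact dvd_trans (dvd_pow_self 2 (by omega : α ≠ 0)) h
      have hle : gDeg SG y ≤ gDeg SG x := by
        have c1 : (SG.neighborSet y).ncard ≤ ((SG.neighborSet x \ {y}) ∪ {x}).ncard :=
          Set.ncard_le_ncard hsub (Set.toFinite _)
        have c2 : ((SG.neighborSet x \ {y}) ∪ {x}).ncard ≤
            (SG.neighborSet x \ {y}).ncard + 1 := by
          have := Set.ncard_union_le (SG.neighborSet x \ {y}) ({x} : Set G)
          simpa using this
        have c3 : (SG.neighborSet x \ {y}).ncard = (SG.neighborSet x).ncard - 1 :=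
          Set.ncard_diff_singleton_of_mem hyNx
        have c4 : 1 ≤ (SG.neighborSet x).ncard :=
          (Set.ncard_pos (Set.toFinite _)).mpr ⟨y, hyNx⟩
        unfold gDeg
        omega
      refine ⟨y, le_antisymm (hxdeg ▸ hle) hminley, ?_, ?_⟩
      · rw [hy]
        have : 1 < 2 ^ α := Nat.one_lt_two_pow_iff.mpr (by omega)
        omega
      · rw [hy]
        intro h
        have : α = 1 := Nat.pow_right_injective le_rfl (by simpa using h)
        omega
    · exact ⟨x, hxdeg, hx1, h2⟩
  have hvinv : v⁻¹ ≠ v := by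
    intro h
    have hpow : v ^ 2 = 1 := by
      calc v ^ 2 = v * v := pow_two v
        _ = v * v⁻¹ := by rw [h]
        _ = 1 := mul_inv_cancel v
    have := orderOf_dvd_of_pow_eq_one hpow
    rcases (Nat.dvd_prime Nat.prime_two).mp this with h' | h'
    · exact hv1 h'
    · exact hv2 h'
  have hoinv : orderOf v⁻¹ = orderOf v := orderOf_inv v
  -- an incomparable element
  obtain ⟨b, hb⟩ : ∃ b : G, ¬ (orderOf b ∣ orderOf v ∨ orderOf v ∣ orderOf b) := by
    by_contra h
    push_neg at h
    apply hfull v hvdeg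
    ext g
    rw [mem_nb]
    simp only [Set.mem_compl_iff, Set.mem_singleton_iff]
    constructor
    · rintro ⟨h1, _⟩; exact h1
    · intro h1
      refine ⟨h1, ?_⟩
      have := h g
      tauto
  have hbv : b ≠ v := fun h => hb (Or.inl (by rw [h]))
  have hbvinv : b ≠ v⁻¹ := fun h => hb (Or.inl (by rw [h, hoinv]))
  have hvinvN : v⁻¹ ∈ SG.neighborSet v := by
    rw [mem_nb]
    exact ⟨hvinv, Or.inl (by rw [hoinv])⟩
  set S : Set G := SG.neighborSet v \ {v⁻¹} with hSdef
  have hScard : S.ncard = minDeg SG - 1 := by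
    rw [hSdef, Set.ncard_diff_singleton_of_mem hvinvN]
    unfold gDeg at hvdeg
    omega
  have hmin1 : 1 ≤ minDeg SG := by
    rw [← hvdeg]
    exact (Set.ncard_pos (Set.toFinite _)).mpr ⟨v⁻¹, hvinvN⟩
  have hvS : v ∈ Sᶜ := by
    intro hvmem
    exact SG.loopless.irrefl v hvmem.1
  have hbS : b ∈ Sᶜ := by
    intro hbmem
    exact hb ((mem_nb v b).mp hbmem.1).2
  have hvc : vertexConn SG ≤ minDeg SG - 1 := by
    apply Nat.sInf_le
    refine ⟨S, hScard, ⟨v, hvS⟩, Or.inl ?_⟩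
    intro hpre
    have key : ∀ (u w : (Sᶜ : Set G)), (SG.induce Sᶜ).Walk u w →
        (u.1 = v ∨ u.1 = v⁻¹) → (w.1 = v ∨ w.1 = v⁻¹) := by
      intro u w p
      induction p with
      | nil => exact id
      | @cons u' m w' h p ih =>
        intro hu
        apply ih
        have hadj : SG.Adj u'.1 m.1 := h
        have hou : orderOf u'.1 = orderOf v := by
          rcases hu with h' | h'
          · rw [h']
          · rw [h', hoinv]
        rw [SimpleGraph.mem_neighborSet] at *
        have hcomp : orderOf m.1 ∣ orderOf v ∨ orderOf v ∣ orderOf m.1 := by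
          have := ((mem_nb u'.1 m.1).mpr ?_)
          · rw [← hou]
            exact ((mem_nb u'.1 m.1).mp this).2
          · exact ⟨fun he => hadj.ne he.symm, Or.symm hadj.2⟩
        by_cases hm1 : m.1 = v
        · exact Or.inl hm1
        by_cases hm2 : m.1 = v⁻¹
        · exact Or.inr hm2
        exfalso
        apply m.2
        exact ⟨(mem_nb v m.1).mpr ⟨hm1, hcomp⟩, by simpa using hm2⟩
    obtain ⟨p⟩ := hpre ⟨v, hvS⟩ ⟨b, hbS⟩
    rcases key _ _ p (Or.inl rfl) with h | h
    · exact hbv h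
    · exact hbvinv h
  omega
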